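/- Let E be a digraph on Fin N and suppose there is a path from i to j in E, i.e. Relation.TransGen E i j holds. Then A i j belongs to the Lie subalgebra of Matrix (Fin N) (Fin N) ℝ generated by the set {A k l | E k l}, i.e. A i j ∈ LieSubalgebra.lieSpan ℝ (Matrix (Fin N) (Fin N) ℝ) {M | ∃ k l, E k l ∧ M = A k l}. -/

import Mathlib

attribute [local instance 100] LieRing.ofAssociativeRing

/-- The negative of the Laplacian of the single-edge digraph `i → j`. -/
def edgeMatrix {N : ℕ} (i j : Fin N) : Matrix (Fin N) (Fin N) ℝ :=
  Matrix.single i j 1 - Matrix.single i i 1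

lemma edgeMatrix_bracket {N : ℕ} {i k j : Fin N} (hik : i ≠ k) (_hkj : k ≠ j)
    (hij : i ≠ j) :
    edgeMatrix i j = ⁅edgeMatrix i k, edgeMatrix k j⁆ + edgeMatrix i k := by
  simp only [edgeMatrix, Ring.lie_def, sub_mul, mul_sub,
    Matrix.single_mul_single_same, Matrix.single_mul_single_of_ne _ _ _ _ hik,
    Matrix.single_mul_single_of_ne _ _ _ _ hij.symm, Matrix.single_mul_single_of_ne _ _ _ _ hik.symm,
    mul_one]
  abel

theorem edgeMatrix_mem_lieSpan_of_path {N : ℕ} (E : Fin N → Fin N → Prop)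
    (i j : Fin N) (hpath : Relation.TransGen E i j) :
    edgeMatrix i j ∈ LieSubalgebra.lieSpan ℝ (Matrix (Fin N) (Fin N) ℝ)
      {M | ∃ k l, E k l ∧ M = edgeMatrix k l} := by
  induction hpath with
  | single h => exact LieSubalgebra.subset_lieSpan ⟨i, _, h, rfl⟩
  | @tail k j hik hkj ih =>
    by_cases hij : i = j
    · subst hij
      have : edgeMatrix i i = 0 := sub_self _
      rw [this]; exact zero_mem _
    by_cases hik' : i = k
    · subst hik'
      exact LieSubalgebra.subset_lieSpan ⟨i, j, hkj, rfl⟩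
    by_cases hkj' : k = j
    · subst hkj'; exact ih
    rw [edgeMatrix_bracket hik' hkj' hij]
    exact add_mem (LieSubalgebra.lie_mem _ ih
      (LieSubalgebra.subset_lieSpan ⟨k, j, hkj, rfl⟩)) ih
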